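/- For the example target distribution q_{X₁X₂Y} (with X₁=(X₁₁,X₁₂) a pair of independent uniform bits, X₂=B uniform on {1,2} independent of X₁, and Y=X_{1B}), every pmf of the form p(x₁,x₂,u₁,u₂,x̃₁,x̃₂,y) = p(x₁)p(x₂) ∏_{j=1,2} p(u_j,x̃_j|x_j) · p(y|u₁,u₂,x̃₁,x̃₂) on finite alphabets whose (X₁,X₂,Y)-marginal equals q(x₁,x₂,y) satisfies I(U₁,X̃₁;X₁) ≥ 2 and I(U₂,X̃₂;X₂) ≥ 1 (in bits). -/

import Mathlib

open scoped BigOperators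

noncomputable section

/-- `p` is a probability mass function on the finite type `α`. -/
def IsPMF {α : Type*} [Fintype α] (p : α → ℝ) : Prop :=
  (∀ a, 0 ≤ p a) ∧ ∑ a, p a = 1

/-- `k` is a stochastic kernel from `α` to the finite type `β`. -/
def IsKernel {α β : Type*} [Fintype β] (k : α → β → ℝ) : Prop :=
  ∀ a, (∀ b, 0 ≤ k a b) ∧ ∑ b, k a b = 1

/-- Distribution (pushforward pmf) of the random variable `X` under the pmf `μ`. -/
def rvDist {Ω α : Type*} [Fintype Ω] [DecidableEq α] (μ : Ω → ℝ) (X : Ω → α) : α → ℝ :=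
  fun a => ∑ ω, if X ω = a then μ ω else 0

/-- Shannon entropy in bits of a pmf on a finite type. -/
def entBits {α : Type*} [Fintype α] (p : α → ℝ) : ℝ :=
  (∑ a, Real.negMulLog (p a)) / Real.log 2

/-- Entropy (in bits) of a random variable `X` under the pmf `μ`. -/
def Hb {Ω α : Type*} [Fintype Ω] [Fintype α] [DecidableEq α] (μ : Ω → ℝ) (X : Ω → α) : ℝ :=
  entBits (rvDist μ X)

/-- Conditional entropy (in bits) `H(X | Z)`. -/
def condHb {Ω α γ : Type*} [Fintype Ω] [Fintype α] [Fintype γ] [DecidableEq α] [DecidableEq γ]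
    (μ : Ω → ℝ) (X : Ω → α) (Z : Ω → γ) : ℝ :=
  Hb μ (fun ω => (X ω, Z ω)) - Hb μ Z

/-- Mutual information (in bits) `I(X; Y)`. -/
def Ib {Ω α β : Type*} [Fintype Ω] [Fintype α] [Fintype β] [DecidableEq α] [DecidableEq β]
    (μ : Ω → ℝ) (X : Ω → α) (Y : Ω → β) : ℝ :=
  Hb μ X + Hb μ Y - Hb μ (fun ω => (X ω, Y ω))

/-- Conditional mutual information (in bits) `I(X; Y | Z)`. -/
def condIb {Ω α β γ : Type*} [Fintype Ω] [Fintype α] [Fintype β] [Fintype γ]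
    [DecidableEq α] [DecidableEq β] [DecidableEq γ]
    (μ : Ω → ℝ) (X : Ω → α) (Y : Ω → β) (Z : Ω → γ) : ℝ :=
  Hb μ (fun ω => (X ω, Z ω)) + Hb μ (fun ω => (Y ω, Z ω))
    - Hb μ (fun ω => (X ω, Y ω, Z ω)) - Hb μ Z

/- The example target distribution: `X₁ = (X₁₁, X₁₂)` a pair of independent uniform bits,
`X₂ = B` uniform on `{1, 2}` (encoded as `Bool`, `false ↦ 1`, `true ↦ 2`) independent of
`X₁`, and `Y = X_{1B}` the `B`-th component of `X₁`. -/

/-- Selection of the `B`-th component of `x₁ = (x₁₁, x₁₂)`. -/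
def selB (b : Bool) (a : Bool × Bool) : Bool := if b then a.2 else a.1

/-- The example target pmf `q_{X₁X₂Y}` on `(Bool × Bool) × Bool × Bool`. -/
def qEx : (Bool × Bool) × Bool × Bool → ℝ :=
  fun z => if z.2.2 = selB z.2.1 z.1 then (8 : ℝ)⁻¹ else 0

/- Projections of a 7-tuple sample space `Ω = 𝒳₁ × 𝒳₂ × 𝒰₁ × 𝒰₂ × 𝒳̃₁ × 𝒳̃₂ × 𝒴`. -/
section Proj7
variable {A B C D E F G : Type*}
def pj1 (ω : A × B × C × D × E × F × G) : A := ω.1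
def pj2 (ω : A × B × C × D × E × F × G) : B := ω.2.1
def pj3 (ω : A × B × C × D × E × F × G) : C := ω.2.2.1
def pj4 (ω : A × B × C × D × E × F × G) : D := ω.2.2.2.1
def pj5 (ω : A × B × C × D × E × F × G) : E := ω.2.2.2.2.1
def pj6 (ω : A × B × C × D × E × F × G) : F := ω.2.2.2.2.2.1
def pj7 (ω : A × B × C × D × E × F × G) : G := ω.2.2.2.2.2.2
end Proj7

/-- **Proposition 1, converse part.**  For the example target distribution, every pmf with
the non-cribbing factorization `p(x₁)p(x₂) ∏_j p(u_j, x̃_j | x_j) p(y | u₁, u₂, x̃₁, x̃₂)`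
whose `(X₁,X₂,Y)`-marginal is the target satisfies `I(U₁, X̃₁; X₁) ≥ 2` and
`I(U₂, X̃₂; X₂) ≥ 1` bits. -/
lemma pos_parts {a b : ℝ} (ha : 0 ≤ a) (h : 0 < a * b) : 0 < a ∧ 0 < b := by
  rcases mul_pos_iff.mp h with ⟨h1,h2⟩|⟨h1,h2⟩
  · exact ⟨h1,h2⟩
  · exact absurd h1 (not_lt.mpr ha)

lemma rvDist_pair_fun {Ω α β : Type*} [Fintype Ω] [DecidableEq α] [DecidableEq β]
    (μ : Ω → ℝ) (Z : Ω → β) (X : Ω → α) (g : β → α)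
    (h : ∀ ω, μ ω ≠ 0 → X ω = g (Z ω)) (b : β) (a : α) :
    rvDist μ (fun ω => (Z ω, X ω)) (b, a) = if a = g b then rvDist μ Z b else 0 := by
  unfold rvDist
  by_cases hga : a = g b
  · rw [if_pos hga]
    apply Finset.sum_congr rfl
    intro ω _
    by_cases hμ : μ ω = 0
    · simp [hμ]
    · have hx := h ω hμ
      by_cases hz : Z ω = b
      · simp [hz, hx, hga, Prod.ext_iff]
      · simp [hz, Prod.ext_iff]
  · rw [if_neg hga]
    apply Finset.sum_eq_zero
    intro ω _
    by_cases hμ : μ ω = 0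
    · simp [hμ]
    · have hx := h ω hμ
      rw [if_neg]
      simp only [Prod.mk.injEq, not_and]
      intro h1 h2
      exact hga (h2 ▸ h1 ▸ hx)

lemma Hb_pair_fun {Ω α β : Type*} [Fintype Ω] [Fintype α] [Fintype β] [DecidableEq α] [DecidableEq β]
    (μ : Ω → ℝ) (Z : Ω → β) (X : Ω → α) (g : β → α)
    (h : ∀ ω, μ ω ≠ 0 → X ω = g (Z ω)) :
    Hb μ (fun ω => (Z ω, X ω)) = Hb μ Z := by
  unfold Hb entBits
  congr 1
  rw [Fintype.sum_prod_type]
  apply Finset.sum_congr rfl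
  intro b _
  simp [rvDist_pair_fun μ Z X g h, apply_ite Real.negMulLog, Real.negMulLog_zero]

lemma rvDist_marg_fst {Ω α β : Type*} [Fintype Ω] [Fintype β] [DecidableEq α] [DecidableEq β]
    (μ : Ω → ℝ) (X : Ω → α) (Y : Ω → β) (a : α) :
    rvDist μ X a = ∑ b, rvDist μ (fun ω => (X ω, Y ω)) (a, b) := by
  unfold rvDist
  rw [Finset.sum_comm]
  apply Finset.sum_congr rfl
  intro ω _
  by_cases hx : X ω = a <;> simp [hx, Prod.ext_iff]

lemma rvDist_marg_mid {Ω α β γ : Type*} [Fintype Ω] [Fintype α] [Fintype γ]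
    [DecidableEq α] [DecidableEq β] [DecidableEq γ]
    (μ : Ω → ℝ) (X : Ω → α) (Y : Ω → β) (Z : Ω → γ) (b : β) :
    rvDist μ Y b = ∑ a, ∑ c, rvDist μ (fun ω => (X ω, Y ω, Z ω)) (a, b, c) := by
  have key : ∀ ω, (if Y ω = b then μ ω else 0)
      = ∑ a, ∑ c, if (X ω, Y ω, Z ω) = (a, b, c) then μ ω else 0 := by
    intro ω
    by_cases hy : Y ω = b <;> simp [hy, Prod.ext_iff, ite_and, Finset.sum_ite_eq']
  unfold rvDist
  simp_rw [key]
  rw [Finset.sum_comm]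
  apply Finset.sum_congr rfl
  intro a _
  rw [Finset.sum_comm]

lemma entBits_const4 : entBits (fun _ : Bool × Bool => (4:ℝ)⁻¹) = 2 := by
  have h4 : Real.log 4 = 2 * Real.log 2 := by
    rw [show (4:ℝ) = 2^2 by norm_num, Real.log_pow]; push_cast; ring
  have hl : Real.log 2 ≠ 0 := (Real.log_pos (by norm_num)).ne'
  simp only [entBits, Real.negMulLog, Finset.sum_const, Finset.card_univ]
  simp [Real.log_inv, h4]
  field_simp

lemma entBits_const2 : entBits (fun _ : Bool => (2:ℝ)⁻¹) = 1 := by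
  have hl : Real.log 2 ≠ 0 := (Real.log_pos (by norm_num)).ne'
  simp only [entBits, Real.negMulLog, Finset.sum_const, Finset.card_univ]
  simp [Real.log_inv]
  field_simp
  norm_num

set_option maxHeartbeats 1000000 in
theorem example_converse_no_crib
    {U1 U2 Xt1 Xt2 : Type*} [Fintype U1] [Fintype U2] [Fintype Xt1] [Fintype Xt2]
    [DecidableEq U1] [DecidableEq U2] [DecidableEq Xt1] [DecidableEq Xt2]
    (μ : (Bool × Bool) × Bool × U1 × U2 × Xt1 × Xt2 × Bool → ℝ)
    (pX1 : Bool × Bool → ℝ) (pX2 : Bool → ℝ)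
    (k1 : Bool × Bool → U1 × Xt1 → ℝ) (k2 : Bool → U2 × Xt2 → ℝ)
    (kY : U1 × U2 × Xt1 × Xt2 → Bool → ℝ)
    (hpX1 : IsPMF pX1) (hpX2 : IsPMF pX2)
    (hk1 : IsKernel k1) (hk2 : IsKernel k2) (hkY : IsKernel kY)
    (hfac : ∀ x1 x2 u1 u2 xt1 xt2 y,
      μ (x1, x2, u1, u2, xt1, xt2, y) =
        pX1 x1 * pX2 x2 * k1 x1 (u1, xt1) * k2 x2 (u2, xt2) * kY (u1, u2, xt1, xt2) y)
    (hmarg : ∀ z, rvDist μ (fun ω => (pj1 ω, pj2 ω, pj7 ω)) z = qEx z) :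
    2 ≤ Ib μ (fun ω => (pj3 ω, pj5 ω)) pj1 ∧
    1 ≤ Ib μ (fun ω => (pj4 ω, pj6 ω)) pj2 := by
  classical
  have hμ0 : ∀ ω, 0 ≤ μ ω := by
    rintro ⟨x1, x2, u1, u2, xt1, xt2, y⟩
    rw [hfac]
    exact mul_nonneg (mul_nonneg (mul_nonneg (mul_nonneg (hpX1.1 x1) (hpX2.1 x2))
      ((hk1 x1).1 (u1, xt1))) ((hk2 x2).1 (u2, xt2))) ((hkY (u1,u2,xt1,xt2)).1 y)
  have hsupp : ∀ x1 x2 u1 u2 xt1 xt2 y, 0 < μ (x1,x2,u1,u2,xt1,xt2,y) → y = selB x2 x1 := by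
    intro x1 x2 u1 u2 xt1 xt2 y hpos
    by_contra hne
    have hq : qEx (x1, x2, y) = 0 := by simp [qEx, hne]
    have hm := hmarg (x1, x2, y)
    rw [hq] at hm
    unfold rvDist at hm
    have hterm := (Finset.sum_eq_zero_iff_of_nonneg ?_).mp hm (x1,x2,u1,u2,xt1,xt2,y)
      (Finset.mem_univ _)
    · simp only [pj1, pj2, pj7, if_pos rfl] at hterm
      exact hpos.ne' hterm
    · intro ω _
      split_ifs
      · exact hμ0 ω
      · exact le_refl 0
  have hex : ∀ x1 x2, ∃ u1 u2 xt1 xt2, 0 < μ (x1,x2,u1,u2,xt1,xt2, selB x2 x1) := by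
    intro x1 x2
    by_contra hcon
    push_neg at hcon
    have hm := hmarg (x1, x2, selB x2 x1)
    have hq : qEx (x1, x2, selB x2 x1) = (8:ℝ)⁻¹ := by simp [qEx]
    rw [hq] at hm
    unfold rvDist at hm
    have hz : (∑ ω, if (pj1 ω, pj2 ω, pj7 ω) = (x1, x2, selB x2 x1) then μ ω else 0) = 0 := by
      apply Finset.sum_eq_zero
      rintro ⟨a,b,c,d,e,f,g⟩ _
      simp only [pj1, pj2, pj7, Prod.mk.injEq]
      split_ifs with h
      · obtain ⟨h1, h2, h3⟩ := h
        subst h1; subst h2; subst h3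
        exact le_antisymm (hcon c d e f) (hμ0 _)
      · rfl
    rw [hz] at hm
    norm_num at hm
  have hposfac : ∀ x1 x2 u1 u2 xt1 xt2 y, 0 < μ (x1,x2,u1,u2,xt1,xt2,y) →
      0 < pX1 x1 ∧ 0 < pX2 x2 ∧ 0 < k1 x1 (u1,xt1) ∧ 0 < k2 x2 (u2,xt2) := by
    intro x1 x2 u1 u2 xt1 xt2 y h
    rw [hfac] at h
    have n1 := hpX1.1 x1; have n2 := hpX2.1 x2
    have n3 := (hk1 x1).1 (u1,xt1); have n4 := (hk2 x2).1 (u2,xt2)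
    have h4 := pos_parts (mul_nonneg (mul_nonneg (mul_nonneg n1 n2) n3) n4) h
    have h3 := pos_parts (mul_nonneg (mul_nonneg n1 n2) n3) h4.1
    have h2 := pos_parts (mul_nonneg n1 n2) h3.1
    have h1 := pos_parts n1 h2.1
    exact ⟨h1.1, h1.2, h2.2, h3.2⟩
  have hkYex : ∀ v, ∃ y, 0 < kY v y := by
    intro v
    by_contra hcon
    push_neg at hcon
    have hz : ∑ y, kY v y = 0 :=
      Finset.sum_eq_zero (fun y _ => le_antisymm (hcon y) ((hkY v).1 y))
    rw [(hkY v).2] at hz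
    norm_num at hz
  have huniq1 : ∀ a a' (z : U1 × Xt1), 0 < pX1 a → 0 < k1 a z →
      0 < pX1 a' → 0 < k1 a' z → a = a' := by
    intro a a' z hpa hka hpa' hka'
    have key : ∀ x2 : Bool, selB x2 a = selB x2 a' := by
      intro x2
      obtain ⟨u1', u2, xt1', xt2, hpos⟩ := hex a x2
      obtain ⟨_, hp2, _, hk2p⟩ := hposfac _ _ _ _ _ _ _ hpos
      obtain ⟨y, hy⟩ := hkYex (z.1, u2, z.2, xt2)
      have m1 : 0 < μ (a, x2, z.1, u2, z.2, xt2, y) := by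
        rw [hfac]
        exact mul_pos (mul_pos (mul_pos (mul_pos hpa hp2) (by simpa using hka)) hk2p) hy
      have m2 : 0 < μ (a', x2, z.1, u2, z.2, xt2, y) := by
        rw [hfac]
        exact mul_pos (mul_pos (mul_pos (mul_pos hpa' hp2) (by simpa using hka')) hk2p) hy
      rw [← hsupp _ _ _ _ _ _ _ m1, ← hsupp _ _ _ _ _ _ _ m2]
    have hf := key false
    have ht := key true
    simp only [selB, if_false, if_true, Bool.false_eq_true, Bool.true_eq_false] at hf ht
    exact Prod.ext hf ht
  have huniq2 : ∀ b b' (w : U2 × Xt2), 0 < pX2 b → 0 < k2 b w →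
      0 < pX2 b' → 0 < k2 b' w → b = b' := by
    intro b b' w hpb hkb hpb' hkb'
    obtain ⟨u1, u2', xt1, xt2', hpos⟩ := hex (false, true) b
    obtain ⟨hp1, _, hk1p, _⟩ := hposfac _ _ _ _ _ _ _ hpos
    obtain ⟨y, hy⟩ := hkYex (u1, w.1, xt1, w.2)
    have m1 : 0 < μ ((false,true), b, u1, w.1, xt1, w.2, y) := by
      rw [hfac]
      exact mul_pos (mul_pos (mul_pos (mul_pos hp1 hpb) hk1p) (by simpa using hkb)) hy
    have m2 : 0 < μ ((false,true), b', u1, w.1, xt1, w.2, y) := by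
      rw [hfac]
      exact mul_pos (mul_pos (mul_pos (mul_pos hp1 hpb') hk1p) (by simpa using hkb')) hy
    have e1 := hsupp _ _ _ _ _ _ _ m1
    have e2 := hsupp _ _ _ _ _ _ _ m2
    have heq : selB b (false, true) = selB b' (false, true) := by rw [← e1, ← e2]
    cases b <;> cases b'
    · rfl
    · exact absurd heq (by decide)
    · exact absurd heq (by decide)
    · rfl
  -- construct g1
  have hg1ex : ∀ z : U1 × Xt1, ∃ a₀ : Bool × Bool, ∀ a, 0 < pX1 a → 0 < k1 a z → a = a₀ := by
    intro z
    by_cases h : ∃ a, 0 < pX1 a ∧ 0 < k1 a z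
    · obtain ⟨a₀, h1, h2⟩ := h
      exact ⟨a₀, fun a ha hk => huniq1 a a₀ z ha hk h1 h2⟩
    · push_neg at h
      exact ⟨(false,false), fun a ha hk => absurd hk (not_lt.mpr (h a ha))⟩
  choose g1 hg1 using hg1ex
  have hg2ex : ∀ w : U2 × Xt2, ∃ b₀ : Bool, ∀ b, 0 < pX2 b → 0 < k2 b w → b = b₀ := by
    intro w
    by_cases h : ∃ b, 0 < pX2 b ∧ 0 < k2 b w
    · obtain ⟨b₀, h1, h2⟩ := h
      exact ⟨b₀, fun b hb hk => huniq2 b b₀ w hb hk h1 h2⟩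
    · push_neg at h
      exact ⟨false, fun b hb hk => absurd hk (not_lt.mpr (h b hb))⟩
  choose g2 hg2 using hg2ex
  have hrel1 : ∀ ω, μ ω ≠ 0 → pj1 ω = g1 ((fun ω => (pj3 ω, pj5 ω)) ω) := by
    rintro ⟨x1,x2,u1,u2,xt1,xt2,y⟩ hne
    have hpos : 0 < μ (x1,x2,u1,u2,xt1,xt2,y) := lt_of_le_of_ne (hμ0 _) (Ne.symm hne)
    obtain ⟨h1, _, h3, _⟩ := hposfac _ _ _ _ _ _ _ hpos
    exact hg1 (u1, xt1) x1 h1 h3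
  have hrel2 : ∀ ω, μ ω ≠ 0 → pj2 ω = g2 ((fun ω => (pj4 ω, pj6 ω)) ω) := by
    rintro ⟨x1,x2,u1,u2,xt1,xt2,y⟩ hne
    have hpos : 0 < μ (x1,x2,u1,u2,xt1,xt2,y) := lt_of_le_of_ne (hμ0 _) (Ne.symm hne)
    obtain ⟨_, h2, _, h4⟩ := hposfac _ _ _ _ _ _ _ hpos
    exact hg2 (u2, xt2) x2 h2 h4
  -- marginals
  have hd1 : ∀ a, rvDist μ pj1 a = (4:ℝ)⁻¹ := by
    intro a
    rw [rvDist_marg_fst μ pj1 (fun ω => (pj2 ω, pj7 ω)) a]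
    have hq : ∀ b : Bool × Bool,
        rvDist μ (fun ω => (pj1 ω, pj2 ω, pj7 ω)) (a, b) = qEx (a, b) := fun b => hmarg (a, b)
    simp_rw [hq]
    rw [Fintype.sum_prod_type]
    simp [qEx, selB, Finset.sum_ite_eq']
    norm_num
  have hd2 : ∀ b, rvDist μ pj2 b = (2:ℝ)⁻¹ := by
    intro b
    rw [rvDist_marg_mid μ pj1 pj2 pj7 b]
    have hq : ∀ (a : Bool × Bool) (c : Bool),
        rvDist μ (fun ω => (pj1 ω, pj2 ω, pj7 ω)) (a, b, c) = qEx (a, b, c) :=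
      fun a c => hmarg (a, b, c)
    simp_rw [hq]
    simp [qEx, Finset.sum_ite_eq']
    norm_num
  have hH1 : Hb μ pj1 = 2 := by
    unfold Hb
    rw [show rvDist μ pj1 = fun _ => (4:ℝ)⁻¹ from funext hd1, entBits_const4]
  have hH2 : Hb μ pj2 = 1 := by
    unfold Hb
    rw [show rvDist μ pj2 = fun _ => (2:ℝ)⁻¹ from funext hd2, entBits_const2]
  constructor
  · have hpair := Hb_pair_fun μ (fun ω => (pj3 ω, pj5 ω)) pj1 g1 hrel1
    unfold Ib
    rw [hpair, hH1]
    ring_nf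
    linarith
  · have hpair := Hb_pair_fun μ (fun ω => (pj4 ω, pj6 ω)) pj2 g2 hrel2
    unfold Ib
    rw [hpair, hH2]
    ring_nf
    linarith
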